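/- arXiv:2312.13777 — 2 statements merged into one kernel-verified Lean document; each statement's English description precedes it below -/
import Mathlib

section
/- Let M, K, R be natural numbers with M ≤ 2K, K ≤ M, and R ≤ M−K. Then 2^R · C(M−K, R) ≤ C(M, R); equivalently, when at least half of the M transactions in a batch are invalid, the probability p = C(M−K, R)/C(M, R) that a random sample of R transactions contains no invalid transaction is at most (1/2)^R. -/
lemma two_pow_choose_le (N M : ℕ) (hNM : 2 * N ≤ M) :
    ∀ r, r ≤ N → 2 ^ r * N.choose r ≤ M.choose r := by
  intro r
  induction r with
  | zero => simp
  | succ r ih =>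
    intro hr
    have hrN : r ≤ N := Nat.le_of_succ_le hr
    have h1 := ih hrN
    have key : 2 ^ (r + 1) * N.choose (r + 1) * (r + 1) ≤ M.choose (r + 1) * (r + 1) := by
      have hNid : N.choose (r + 1) * (r + 1) = N.choose r * (N - r) :=
        Nat.choose_succ_right_eq N r
      have hMid : M.choose (r + 1) * (r + 1) = M.choose r * (M - r) :=
        Nat.choose_succ_right_eq M r
      calc 2 ^ (r + 1) * N.choose (r + 1) * (r + 1)
          = 2 ^ r * N.choose r * (2 * (N - r)) := by
            rw [mul_assoc, hNid]; ring
        _ ≤ M.choose r * (M - r) := by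
            apply Nat.mul_le_mul h1
            omega
        _ = M.choose (r + 1) * (r + 1) := hMid.symm
    exact Nat.le_of_mul_le_mul_right key (Nat.succ_pos r)

/-- If M ≤ 2K, K ≤ M and R ≤ M−K, then 2^R · C(M−K, R) ≤ C(M, R); equivalently
the probability p = C(M−K, R)/C(M, R) is at most (1/2)^R. -/
theorem miss_probability_half_pow (M K R : ℕ) (hM : M ≤ 2 * K) (hK : K ≤ M)
    (hR : R ≤ M - K) :
    2 ^ R * (M - K).choose R ≤ M.choose R ∧
    (((M - K).choose R : ℝ) / (M.choose R : ℝ)) ≤ (1 / 2 : ℝ) ^ R := by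
  have hnat : 2 ^ R * (M - K).choose R ≤ M.choose R :=
    two_pow_choose_le (M - K) M (by omega) R hR
  refine ⟨hnat, ?_⟩
  have hMR : R ≤ M := le_trans hR (Nat.sub_le _ _)
  have hpos : (0 : ℝ) < (M.choose R : ℝ) := by
    exact_mod_cast Nat.choose_pos hMR
  rw [div_le_iff₀ hpos]
  have : ((2 : ℝ) ^ R) * ((M - K).choose R : ℝ) ≤ (M.choose R : ℝ) := by
    exact_mod_cast hnat
  calc ((M - K).choose R : ℝ) = (1 / 2 : ℝ) ^ R * (2 ^ R * ((M - K).choose R : ℝ)) := by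
        rw [← mul_assoc, ← mul_pow]; norm_num
    _ ≤ (1 / 2 : ℝ) ^ R * (M.choose R : ℝ) := by
        apply mul_le_mul_of_nonneg_left this (by positivity)
end

section
/- Let K and R be natural numbers with 1 ≤ R ≤ K, let M = 2K, and let p = C(M−K, R)/C(M, R) = C(K, R)/C(2K, R) as a real number. Then (1/2)·((1−p)^{12} + 1) ≥ 1 − 6·(1/2)^R; i.e., for F = 3 and a batch in which half the transactions are invalid, sampling R transactions per correct secondary batcher guarantees validity probability α at least 1 − 6·2^{−R}. -/
lemma two_pow_descFactorial_le (K R : ℕ) (hRK : R ≤ K) :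
    2 ^ R * K.descFactorial R ≤ (2 * K).descFactorial R := by
  induction R with
  | zero => simp
  | succ n ih =>
    have hn : n ≤ K := Nat.le_of_succ_le hRK
    rw [Nat.descFactorial_succ, Nat.descFactorial_succ, pow_succ]
    have h1 : 2 * (K - n) ≤ 2 * K - n := by omega
    calc 2 ^ n * 2 * ((K - n) * K.descFactorial n)
        = (2 * (K - n)) * (2 ^ n * K.descFactorial n) := by ring
      _ ≤ (2 * K - n) * (2 * K).descFactorial n :=
          Nat.mul_le_mul h1 (ih hn)

lemma two_pow_choose_le_s14 (K R : ℕ) (hRK : R ≤ K) :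
    2 ^ R * K.choose R ≤ (2 * K).choose R := by
  have h := two_pow_descFactorial_le K R hRK
  rw [Nat.descFactorial_eq_factorial_mul_choose, Nat.descFactorial_eq_factorial_mul_choose] at h
  have hfac : 0 < R.factorial := R.factorial_pos
  calc 2 ^ R * K.choose R
      = 2 ^ R * (R.factorial * K.choose R) / R.factorial := by
        rw [Nat.mul_div_assoc _ (Dvd.intro _ rfl), Nat.mul_div_cancel_left _ hfac]
    _ ≤ R.factorial * (2 * K).choose R / R.factorial := by
        exact Nat.div_le_div_right h
    _ = (2 * K).choose R := Nat.mul_div_cancel_left _ hfac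

/-- For 1 ≤ R ≤ K, M = 2K and p = C(M−K, R)/C(M, R), we have
(1/2)((1−p)^12 + 1) ≥ 1 − 6·(1/2)^R. -/
theorem alpha_bound_half_invalid (K R M : ℕ) (hR1 : 1 ≤ R) (hRK : R ≤ K)
    (hM : M = 2 * K) (p : ℝ)
    (hp : p = ((M - K).choose R : ℝ) / (M.choose R : ℝ)) :
    (1 / 2 : ℝ) * ((1 - p) ^ 12 + 1) ≥ 1 - 6 * (1 / 2 : ℝ) ^ R := by
  have hMK : M - K = K := by omega
  have hchoose_pos : 0 < (M.choose R) := Nat.choose_pos (by omega)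
  have hcpos : (0:ℝ) < (M.choose R : ℝ) := by exact_mod_cast hchoose_pos
  have hkey : 2 ^ R * K.choose R ≤ M.choose R := by
    rw [hM]; exact two_pow_choose_le_s14 K R hRK
  have hple : p ≤ (1/2:ℝ) ^ R := by
    rw [hp, hMK, div_le_iff₀ hcpos]
    have : ((2:ℝ)^R) * (K.choose R : ℝ) ≤ (M.choose R : ℝ) := by exact_mod_cast hkey
    calc (K.choose R : ℝ) = (1/2:ℝ)^R * ((2:ℝ)^R * (K.choose R : ℝ)) := by
          rw [← mul_assoc, ← mul_pow]; norm_num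
      _ ≤ (1/2:ℝ)^R * (M.choose R : ℝ) := by
          apply mul_le_mul_of_nonneg_left this (by positivity)
  have hp0 : 0 ≤ p := by rw [hp]; positivity
  have hbern : (1:ℝ) - 12 * p ≤ (1 - p) ^ 12 := by
    have h := one_add_mul_le_pow (a := -p) (by
      have h12 : (1/2:ℝ)^R ≤ 1 := pow_le_one₀ (by norm_num) (by norm_num)
      linarith) 12
    have : (1:ℝ) + 12 * (-p) ≤ (1 + -p) ^ 12 := by exact_mod_cast h
    nlinarith [this]
  nlinarith [hbern, hple]
end
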